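/- (Theorem 4.12, module exclusion via node control; path formulation.) Let F = (f₁, …, f_n) be a Boolean network on variable set V, let I ⊆ V (the variables of the excludable module), let x* ∈ V ∖ I, and let P ⊆ V ∖ I (the phenotype variables). Assume: (i) every directed path in the wiring diagram of F from a vertex of I to a vertex of P passes through x*; (ii) f_{x*} ≢ 0 has stratified representation with layers M₁, …, M_r, there is a variable y* ∉ I appearing in a layer M_j of f_{x*} with factor (y* + a), and j is strictly smaller than the index of every layer of f_{x*} containing a variable of I (I-variables of f_{x*} may also lie in the core polynomial); (iii) every directed path in the wiring diagram of F from a vertex of I to a variable appearing in one of the layers M₁, …, M_{j-1} of f_{x*} passes through x*. Let F^μ be the controlled network obtained from F by the node control fixing y*, i.e., replacing the update function of y* by the constant a. Then for any two initial states z, z' ∈ 𝔽₂^V that agree on all variables of V ∖ I and whose y*-coordinate equals a, the trajectories of F^μ from z and z' agree on x* and on every variable of P at all times t ≥ 0. In particular, the phenotype determined by P in F^μ is independent of the module I, so I can be excluded from the control search. -/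

import Mathlib

/-- A Boolean function `f` is essential in (depends on) the variable `v` if flipping
the value of `v` can change the value of `f`. -/
def EssentialIn {V : Type*} [DecidableEq V] (f : (V → ZMod 2) → ZMod 2) (v : V) : Prop :=
  ∃ x, f x ≠ f (Function.update x v (x v + 1))

/-- A Boolean function is canalizing if some variable `v` has an input value `a` that
forces the output value `b`. -/
def IsCanalizing {V : Type*} (f : (V → ZMod 2) → ZMod 2) : Prop :=
  ∃ (v : V) (a b : ZMod 2), ∀ x, x v = a → f x = b

/-- The extended monomial on the variable set `S` with constants `a`,
`M(x) = ∏_{j ∈ S} (x_j + a_j)`. -/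
def extMonomial {V : Type*} (S : Finset V) (a : V → ZMod 2) (x : V → ZMod 2) : ZMod 2 :=
  ∏ j ∈ S, (x j + a j)

/-- The nested form `M₁(M₂(⋯(M_{r-1}(M_r·p + 1) + 1)⋯) + 1)` determined by a list of
layers (variable sets) `L`, constants `a`, and a core polynomial `p`. For `L = []` it
is just `p`. -/
def nestedLayers {V : Type*} (a : V → ZMod 2) (p : (V → ZMod 2) → ZMod 2) :
    List (Finset V) → (V → ZMod 2) → ZMod 2
  | [], x => p x
  | [S], x => extMonomial S a x * p x
  | S :: T :: Ss, x => extMonomial S a x * (nestedLayers a p (T :: Ss) x + 1)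

/-- `IsStratification f L a p q` says that
`f = M₁(M₂(⋯(M_{r-1}(M_r·p_C + 1) + 1)⋯) + 1) + q` is a representation of `f` as in
the He–Macauley stratification theorem: the layers `Mᵢ = ∏_{j ∈ Sᵢ} (x_j + a_j)` are
nonconstant extended monomials in pairwise disjoint variable sets, the core polynomial
`p` is independent of all layer variables and is identically `1` or non-canalizing,
and the exceptional-case conditions hold (if `p ≡ 1` and `r ≠ 1` then `k_r ≥ 2`; if
`p ≡ 1`, `r = 1`, `k₁ = 1` then `q = 0`; and for `r = 0` the representation is
`f = p_C`, i.e. `q = 0`). -/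
def IsStratification {V : Type*} [DecidableEq V] (f : (V → ZMod 2) → ZMod 2)
    (L : List (Finset V)) (a : V → ZMod 2) (p : (V → ZMod 2) → ZMod 2) (q : ZMod 2) :
    Prop :=
  (∀ S ∈ L, S.Nonempty) ∧
  L.Pairwise Disjoint ∧
  (∀ S ∈ L, ∀ v ∈ S, ¬ EssentialIn p v) ∧
  (p = (fun _ => 1) ∨ ¬ IsCanalizing p) ∧
  (p = (fun _ => 1) → L.length ≠ 1 → ∀ S ∈ L.getLast?, 2 ≤ S.card) ∧
  (p = (fun _ => 1) → ∀ S, L = [S] → S.card = 1 → q = 0) ∧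
  (L = [] → q = 0) ∧
  f = fun x => nestedLayers a p L x + q



private lemma zmod2_flip (b c : ZMod 2) (h : b ≠ c) : c = b + 1 := by
  revert b c; decide

private lemma eq_of_flip_invariant {V : Type*} [DecidableEq V] [Fintype V]
    (f : (V → ZMod 2) → ZMod 2) :
    ∀ (n : ℕ) (x x' : V → ZMod 2),
      (Finset.univ.filter fun u => x u ≠ x' u).card ≤ n →
      (∀ u, x u ≠ x' u → ∀ y, f y = f (Function.update y u (y u + 1))) →
      f x = f x' := by
  intro n
  induction n with
  | zero =>
    intro x x' hc hflip
    have hxx : ∀ u, x u = x' u := by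
      intro u; by_contra hu
      have hmem : u ∈ Finset.univ.filter fun u => x u ≠ x' u := by simp [hu]
      have := Finset.card_pos.mpr ⟨u, hmem⟩
      omega
    exact congrArg f (funext hxx)
  | succ n ih =>
    intro x x' hc hflip
    by_cases hxx : ∀ u, x u = x' u
    · exact congrArg f (funext hxx)
    · push_neg at hxx
      obtain ⟨u, hu⟩ := hxx
      have hx'u : x' u = x u + 1 := zmod2_flip _ _ hu
      set x₁ := Function.update x u (x u + 1) with hx1
      have h1 : f x = f x₁ := hflip u hu x
      have hsub : (Finset.univ.filter fun u' => x₁ u' ≠ x' u') ⊆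
          (Finset.univ.filter fun u' => x u' ≠ x' u').erase u := by
        intro u' hu'
        simp only [Finset.mem_filter, Finset.mem_univ, true_and] at hu'
        rcases eq_or_ne u' u with rfl | hne
        · exact absurd (by simp [hx1, hx'u]) hu'
        · simp only [hx1, Function.update_of_ne hne] at hu'
          exact Finset.mem_erase.mpr ⟨hne, by simp [hu']⟩
      have hcard : (Finset.univ.filter fun u' => x₁ u' ≠ x' u').card ≤ n := by
        have hmem : u ∈ Finset.univ.filter fun u' => x u' ≠ x' u' := by simp [hu]
        have := Finset.card_le_card hsub
        have := Finset.card_erase_of_mem hmem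
        omega
      have h2 : f x₁ = f x' := by
        refine ih x₁ x' hcard ?_
        intro u' hu'
        rcases eq_or_ne u' u with rfl | hne
        · exact absurd (by simp [hx1, hx'u]) hu'
        · exact hflip u' (by simpa [hx1, Function.update_of_ne hne] using hu')
      rw [h1, h2]

private lemma extMonomial_congr {V : Type*} (S : Finset V) (a x x' : V → ZMod 2)
    (hxx : ∀ v ∈ S, x v = x' v) : extMonomial S a x = extMonomial S a x' :=
  Finset.prod_congr rfl fun v hv => by rw [hxx v hv]

private lemma extMonomial_zero {V : Type*} (S : Finset V) (a x : V → ZMod 2) (v : V)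
    (hv : v ∈ S) (hx : x v = a v) : extMonomial S a x = 0 :=
  Finset.prod_eq_zero hv (by rw [hx, CharTwo.add_self_eq_zero])

private lemma nested_zero_congr {V : Type*} [DecidableEq V] (a : V → ZMod 2)
    (p : (V → ZMod 2) → ZMod 2) :
    ∀ (L1 : List (Finset V)) (S : Finset V) (L2 : List (Finset V)) (x x' : V → ZMod 2),
      extMonomial S a x = 0 → extMonomial S a x' = 0 →
      (∀ T ∈ L1, ∀ v ∈ T, x v = x' v) →
      nestedLayers a p (L1 ++ S :: L2) x = nestedLayers a p (L1 ++ S :: L2) x' := by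
  intro L1
  induction L1 with
  | nil =>
    intro S L2 x x' h h' _
    cases L2 with
    | nil => simp [nestedLayers, h, h']
    | cons T Ss => simp [nestedLayers, h, h']
  | cons A L1' ih =>
    intro S L2 x x' h h' hagree
    obtain ⟨B, Bs, hB⟩ : ∃ B Bs, L1' ++ S :: L2 = B :: Bs := by
      cases hl : L1' ++ S :: L2 with
      | nil => simp at hl
      | cons B Bs => exact ⟨B, Bs, rfl⟩
    have key := ih S L2 x x' h h' (fun T hT v hv => hagree T (List.mem_cons_of_mem _ hT) v hv)
    rw [hB] at key
    simp only [List.cons_append, hB, nestedLayers]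
    rw [key, extMonomial_congr A a x x' (hagree A List.mem_cons_self)]

private def GoodVar {V : Type*} (I : Set V) (E : V → V → Prop) (xstar : V) (v : V) : Prop :=
  v ∉ I ∧ ∀ (l : List V) (hne : l ≠ []), l.Chain' E → l.head hne ∈ I →
    l.getLast hne = v → xstar ∈ l

/-- **Theorem 4.12, module exclusion via node control; path
formulation.** Let `F` be a Boolean network on the variable set `V`, `I ⊆ V` the
variables of the excludable module, `xstar ∉ I`, and `P ⊆ V ∖ I` the phenotype
variables. Assume: (i) every directed path in the wiring diagram from `I` to `P`
passes through `xstar`; (ii) the update function of `xstar` has a stratified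
representation with layers `L`, a variable `ystar ∉ I` appears in layer `M_j` (with
factor `(ystar + a)`), and `j` is strictly smaller than the index of every layer
containing a variable of `I`; (iii) every directed path from `I` to a variable of one
of the layers `M₀, …, M_{j-1}` passes through `xstar`. Then after the node control
fixing `ystar` to its canalizing value `a`, any two initial states agreeing outside
`I` whose `ystar`-coordinate is `a` have trajectories agreeing on `xstar` and on every
phenotype variable at all times; so `I` can be excluded from the control search. -/
theorem stmt_16 (V : Type*) [DecidableEq V] [Fintype V]
    (F : (V → ZMod 2) → (V → ZMod 2))
    (I P : Set V) (xstar ystar : V)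
    (hx : xstar ∉ I) (hPI : ∀ v ∈ P, v ∉ I) (hy : ystar ∉ I)
    -- the wiring diagram: `E u v` iff the update function of `v` depends on `u`
    (E : V → V → Prop)
    (hE : ∀ u v, E u v ↔ ∃ x, F x v ≠ F (Function.update x u (x u + 1)) v)
    -- (i) every path from `I` to `P` passes through `xstar`
    (hpathP : ∀ (l : List V) (hne : l ≠ []), l.Chain' E →
      l.head hne ∈ I → l.getLast hne ∈ P → xstar ∈ l)
    -- (ii) canalizing structure of the update function of `xstar`
    (L : List (Finset V)) (a : V → ZMod 2)
    (p : (V → ZMod 2) → ZMod 2) (q : ZMod 2)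
    (hf0 : (fun x => F x xstar) ≠ fun _ => 0)
    (h : IsStratification (fun x => F x xstar) L a p q)
    (j : ℕ) (hj : j < L.length) (hyj : ystar ∈ L.get ⟨j, hj⟩)
    (hdom : ∀ (i : ℕ) (hi : i < L.length), ∀ v ∈ L.get ⟨i, hi⟩, v ∈ I → j < i)
    -- (iii) every path from `I` to a variable of a layer more dominant than `M_j`
    -- passes through `xstar`
    (hpathL : ∀ (l : List V) (hne : l ≠ []), l.Chain' E →
      l.head hne ∈ I →
      (∃ (i : ℕ) (hi : i < L.length), i < j ∧ l.getLast hne ∈ L.get ⟨i, hi⟩) →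
      xstar ∈ l)
    -- the controlled network: the node control fixing `ystar` to `a`
    (Fμ : (V → ZMod 2) → (V → ZMod 2))
    (hFμ : ∀ z v, Fμ z v = if v = ystar then a ystar else F z v) :
    ∀ z z' : V → ZMod 2,
      (∀ v, v ∉ I → z v = z' v) →
      z ystar = a ystar → z' ystar = a ystar →
      ∀ t : ℕ,
        (Fμ^[t] z) xstar = (Fμ^[t] z') xstar ∧
        ∀ v ∈ P, (Fμ^[t] z) v = (Fμ^[t] z') v := by
  intro z z' hzz hzy hz'y
  have hGoodx : GoodVar I E xstar xstar :=
    ⟨hx, fun l hne _ _ hlast => hlast ▸ List.getLast_mem hne⟩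
  have hGoodLayer : ∀ (i : ℕ) (hi : i < L.length), i < j →
      ∀ v ∈ L.get ⟨i, hi⟩, GoodVar I E xstar v := by
    intro i hi hij v hv
    constructor
    · intro hvI
      have := hdom i hi v hv hvI
      omega
    · intro l hne hch hhead hlast
      exact hpathL l hne hch hhead ⟨i, hi, hij, hlast ▸ hv⟩
  have hGoodPred : ∀ v, GoodVar I E xstar v → v ≠ xstar → ∀ u, E u v →
      GoodVar I E xstar u := by
    intro v hv hvx u hEuv
    have huI : u ∉ I := by
      intro huI
      have hch : List.Chain' E [u, v] := List.isChain_cons_cons.mpr ⟨hEuv, List.isChain_singleton v⟩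
      have hmem := hv.2 [u, v] (by simp) hch huI (by simp)
      simp only [List.mem_cons, List.mem_singleton, List.not_mem_nil, or_false] at hmem
      rcases hmem with h1 | h2
      · exact hx (h1 ▸ huI)
      · exact hvx h2.symm
    refine ⟨huI, ?_⟩
    intro l hne hch hhead hlast
    have hne2 : l ++ [v] ≠ [] := by simp
    have hch2 : (l ++ [v]).Chain' E := by
      show List.IsChain E (l ++ [v])
      rw [List.isChain_append]
      refine ⟨hch, List.isChain_singleton v, ?_⟩
      intro x hxm y hym
      rw [List.getLast?_eq_getLast hne, Option.mem_some_iff] at hxm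
      simp only [List.head?_cons, Option.mem_some_iff] at hym
      rw [← hxm, ← hym, hlast]
      exact hEuv
    have hhead2 : (l ++ [v]).head hne2 ∈ I := by
      rw [List.head_append_left hne]; exact hhead
    have hlast2 : (l ++ [v]).getLast hne2 = v :=
      List.getLast_append_of_ne_nil (by simp) (by simp)
    have hmem := hv.2 (l ++ [v]) hne2 hch2 hhead2 hlast2
    rcases List.mem_append.mp hmem with h1 | h2
    · exact h1
    · simp only [List.mem_singleton] at h2
      exact absurd h2.symm hvx
  have hyconst : ∀ (w : V → ZMod 2), w ystar = a ystar → ∀ t, (Fμ^[t] w) ystar = a ystar := by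
    intro w hw t
    cases t with
    | zero => exact hw
    | succ t => rw [Function.iterate_succ_apply', hFμ]; simp
  have main : ∀ t, ∀ v, GoodVar I E xstar v → (Fμ^[t] z) v = (Fμ^[t] z') v := by
    intro t
    induction t with
    | zero => intro v hv; exact hzz v hv.1
    | succ t ih =>
      intro v hv
      rw [Function.iterate_succ_apply', Function.iterate_succ_apply', hFμ, hFμ]
      by_cases hvy : v = ystar
      · simp [hvy]
      · simp only [if_neg hvy]
        by_cases hvx : v = xstar
        · rw [hvx]
          have hX : (Fμ^[t] z) ystar = a ystar := hyconst z hzy t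
          have hX' : (Fμ^[t] z') ystar = a ystar := hyconst z' hz'y t
          have hfe := h.2.2.2.2.2.2.2
          have e1 : F (Fμ^[t] z) xstar = nestedLayers a p L (Fμ^[t] z) + q := congrFun hfe _
          have e2 : F (Fμ^[t] z') xstar = nestedLayers a p L (Fμ^[t] z') + q := congrFun hfe _
          rw [e1, e2]
          congr 1
          have hLsplit : L = L.take j ++ L.get ⟨j, hj⟩ :: L.drop (j + 1) := by
            rw [List.get_eq_getElem, ← List.drop_eq_getElem_cons hj, List.take_append_drop]
          rw [hLsplit]
          apply nested_zero_congr
          · exact extMonomial_zero _ a _ ystar (by simpa using hyj) hX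
          · exact extMonomial_zero _ a _ ystar (by simpa using hyj) hX'
          · intro T hT v hvT
            obtain ⟨i, hi, hTi⟩ := List.mem_iff_getElem.mp hT
            have hij : i < j := lt_of_lt_of_le hi (by simp [List.length_take])
            have hiL : i < L.length := lt_of_lt_of_le hi (by simp [List.length_take])
            have hLi : L[i] = T := by
              have h1 : (L.take j)[i]? = L[i]? := List.getElem?_take_of_lt hij
              rw [List.getElem?_eq_getElem hi, List.getElem?_eq_getElem hiL, hTi] at h1
              exact (Option.some_inj.mp h1).symm
            exact ih v (hGoodLayer i hiL hij v (by rw [List.get_eq_getElem, hLi]; exact hvT))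
        · refine eq_of_flip_invariant (fun x => F x v) (Fintype.card V) _ _
            (le_of_le_of_eq (Finset.card_filter_le _ _) Finset.card_univ) ?_
          intro u hu y
          by_contra hne
          have hEuv : E u v := (hE u v).mpr ⟨y, hne⟩
          by_cases huy : u = ystar
          · subst huy
            exact hu (by rw [hyconst z hzy t, hyconst z' hz'y t])
          · exact hu (ih u (hGoodPred v hv hvx u hEuv))
  intro t
  refine ⟨main t xstar hGoodx, ?_⟩
  intro v hvP
  refine main t v ⟨hPI v hvP, ?_⟩
  intro l hne hch hhead hlast
  exact hpathP l hne hch hhead (hlast ▸ hvP)
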